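/- arXiv:2211.08845 — 2 statements merged into one kernel-verified Lean document; each statement's English description precedes it below -/
import Mathlib

section
/- Let $\nu:\mathbb{D}\to(0,\infty)$, $\tau:\mathbb{D}\to\mathbb{D}$ holomorphic, $u_0,\dots,u_n$ holomorphic, $\gamma\ge0$, and suppose for each $k$ with $0\le k\le n$ that $\lim_{|\tau(z)|\to1}\frac{\nu(z)|u_k(z)|}{(1-|\tau(z)|^2)^{k+\gamma}}=0$ and $M_k=\sup_{z}\frac{\nu(z)|u_k(z)|}{(1-|\tau(z)|^2)^{k+\gamma}}<\infty$. Let $(f_m)$ be a sequence of holomorphic functions on $\mathbb{D}$ with $\|f_m\|_X\le 1$ (where $X$ satisfies the derivative growth estimate $|f^{(k)}(w)|\le C\|f\|_X/(1-|w|^2)^{k+\gamma}$) such that $f_m\to0$ uniformly on compact subsets of $\mathbb{D}$. Then $\sup_{z\in\mathbb{D}}\nu(z)\big|\sum_{k=0}^n u_k(z)f_m^{(k)}(\tau(z))\big|\to 0$ as $m\to\infty$. -/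
open Metric Finset Filter

/-- Compactness direction: vanishing of the weight quotients at the boundary forces
`S^n_{u,τ} f_m → 0` in `H_ν^∞` for every bounded sequence tending to zero locally
uniformly. -/
theorem stmt_13 (n : ℕ) (ν : ℂ → ℝ) (τ : ℂ → ℂ) (u : ℕ → ℂ → ℂ) (γ C : ℝ)
    (hγ : 0 ≤ γ) (hC : 0 < C)
    (hν : ∀ z ∈ ball (0 : ℂ) 1, 0 < ν z)
    (hτ : DifferentiableOn ℂ τ (ball (0 : ℂ) 1))
    (hτmap : ∀ z ∈ ball (0 : ℂ) 1, τ z ∈ ball (0 : ℂ) 1)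
    (hu : ∀ k ≤ n, DifferentiableOn ℂ (u k) (ball (0 : ℂ) 1))
    (hlim : ∀ k ≤ n, ∀ ε > (0 : ℝ), ∃ r : ℝ, 0 < r ∧ r < 1 ∧
      ∀ z ∈ ball (0 : ℂ) 1, r < ‖τ z‖ →
        ν z * ‖u k z‖ / (1 - ‖τ z‖ ^ 2) ^ ((k : ℝ) + γ) < ε)
    (hM : ∀ k ≤ n, ∃ M : ℝ, ∀ z ∈ ball (0 : ℂ) 1,
      ν z * ‖u k z‖ / (1 - ‖τ z‖ ^ 2) ^ ((k : ℝ) + γ) ≤ M)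
    (N : (ℂ → ℂ) → ℝ) (f : ℕ → ℂ → ℂ)
    (hhol : ∀ m, DifferentiableOn ℂ (f m) (ball (0 : ℂ) 1))
    (hNb : ∀ m, N (f m) ≤ 1)
    (hderiv : ∀ m, ∀ k ≤ n, ∀ w ∈ ball (0 : ℂ) 1,
      ‖iteratedDeriv k (f m) w‖ ≤
        C * N (f m) / (1 - ‖w‖ ^ 2) ^ ((k : ℝ) + γ))
    (hunif : ∀ K : Set ℂ, K ⊆ ball (0 : ℂ) 1 → IsCompact K →
      TendstoUniformlyOn f 0 atTop K) :
    ∀ ε > (0 : ℝ), ∃ M₀ : ℕ, ∀ m ≥ M₀, ∀ z ∈ ball (0 : ℂ) 1,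
      ν z * ‖∑ k ∈ range (n + 1), u k z * iteratedDeriv k (f m) (τ z)‖ < ε := by
  intro ε hε
  have hball : (0:ℂ) ∈ ball (0:ℂ) 1 := by simp
  -- uniform bounds Mf
  have hM' : ∀ k, ∃ M : ℝ, 0 ≤ M ∧ ∀ z ∈ ball (0:ℂ) 1, k ≤ n →
      ν z * ‖u k z‖ / (1 - ‖τ z‖ ^ 2) ^ ((k:ℝ) + γ) ≤ M := by
    intro k
    by_cases hk : k ≤ n
    · obtain ⟨M, hMk⟩ := hM k hk
      exact ⟨max M 0, le_max_right _ _, fun z hz _ => le_trans (hMk z hz) (le_max_left _ _)⟩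
    · exact ⟨0, le_rfl, fun z hz h => absurd h hk⟩
  choose Mf hMf0 hMf using hM'
  -- boundary radii
  set ε' : ℝ := ε / (2 * (n+1) * C) with hε'def
  have hε' : 0 < ε' := div_pos hε (mul_pos (by positivity) hC)
  have hr' : ∀ k, ∃ r : ℝ, 0 < r ∧ r < 1 ∧ (k ≤ n → ∀ z ∈ ball (0:ℂ) 1,
      r < ‖τ z‖ →
      ν z * ‖u k z‖ / (1 - ‖τ z‖ ^ 2) ^ ((k:ℝ) + γ) < ε') := by
    intro k
    by_cases hk : k ≤ n
    · obtain ⟨r, h1, h2, h3⟩ := hlim k hk ε' hε'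
      exact ⟨r, h1, h2, fun _ => h3⟩
    · exact ⟨1/2, by norm_num, by norm_num, fun h => absurd h hk⟩
  choose rr hrr0 hrr1 hrrP using hr'
  have hne : (range (n+1)).Nonempty := ⟨0, by simp⟩
  set r : ℝ := (range (n+1)).sup' hne rr with hrdef
  have hr1 : r < 1 := by
    rw [hrdef, Finset.sup'_lt_iff]
    exact fun k _ => hrr1 k
  -- derivative uniform convergence machinery
  have hKsub : closedBall (0:ℂ) r ⊆ ball (0:ℂ) 1 := closedBall_subset_ball hr1
  have hTLU : TendstoLocallyUniformlyOn f 0 atTop (ball (0:ℂ) 1) := by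
    rw [tendstoLocallyUniformlyOn_iff_forall_isCompact isOpen_ball]
    exact fun K hK hKc => hunif K hK hKc
  have key : ∀ k : ℕ,
      TendstoLocallyUniformlyOn (fun m => deriv^[k] (f m)) 0 atTop (ball (0:ℂ) 1)
      ∧ ∀ m, DifferentiableOn ℂ (deriv^[k] (f m)) (ball (0:ℂ) 1) := by
    intro k
    induction k with
    | zero => exact ⟨hTLU, hhol⟩
    | succ k ih =>
      have hdiff : ∀ m, DifferentiableOn ℂ (deriv^[k+1] (f m)) (ball (0:ℂ) 1) := by
        intro m
        have h := (((ih.2 m).analyticOnNhd isOpen_ball).deriv).differentiableOn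
        rw [Function.iterate_succ']
        exact h
      refine ⟨?_, hdiff⟩
      have h := ih.1.deriv (Filter.Eventually.of_forall ih.2) isOpen_ball
      have hd0 : deriv (0 : ℂ → ℂ) = 0 := by
        funext x
        change deriv (fun _ => (0:ℂ)) x = 0
        exact deriv_const x 0
      rw [hd0] at h
      have hfe : (fun m => deriv^[k+1] (f m)) = deriv ∘ (fun m => deriv^[k] (f m)) := by
        funext m
        simp [Function.comp, Function.iterate_succ_apply']
      rw [hfe]
      exact h
  -- eventual smallness of all derivatives on the closed ball
  have hev : ∀ᶠ m in atTop, ∀ k ∈ range (n+1), ∀ w ∈ closedBall (0:ℂ) r,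
      ‖deriv^[k] (f m) w‖ < ε / (2 * (n+1) * (Mf k + 1)) := by
    rw [eventually_all_finset]
    intro k _
    have hTU : TendstoUniformlyOn (fun m => deriv^[k] (f m)) 0 atTop (closedBall 0 r) :=
      (tendstoLocallyUniformlyOn_iff_forall_isCompact isOpen_ball).mp (key k).1
        _ hKsub (isCompact_closedBall _ _)
    have hη : 0 < ε / (2 * (n+1) * (Mf k + 1)) :=
      div_pos hε (mul_pos (by positivity) (by linarith [hMf0 k]))
    filter_upwards [(Metric.tendstoUniformlyOn_iff.mp hTU) _ hη] with m hm w hw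
    have h := hm w hw
    simpa [Complex.dist_eq] using h
  obtain ⟨M₀, hM₀⟩ := Filter.eventually_atTop.mp hev
  refine ⟨M₀, fun m hm z hz => ?_⟩
  have hτz := hτmap z hz
  have hτabs : ‖τ z‖ < 1 := by
    simpa [Complex.dist_eq] using hτz
  have habs0 : (0:ℝ) ≤ ‖τ z‖ := norm_nonneg _
  have hbase : 0 < 1 - ‖τ z‖ ^ 2 := by nlinarith
  have hexp : (0:ℝ) ≤ (0:ℝ) := le_rfl
  have hden : ∀ k : ℕ, 0 < (1 - ‖τ z‖ ^ 2) ^ ((k:ℝ) + γ) := fun k =>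
    Real.rpow_pos_of_pos hbase _
  have hden1 : ∀ k : ℕ, (1 - ‖τ z‖ ^ 2) ^ ((k:ℝ) + γ) ≤ 1 := fun k =>
    Real.rpow_le_one hbase.le (by nlinarith) (add_nonneg (Nat.cast_nonneg k) hγ)
  have hterm : ∀ k ∈ range (n+1),
      ν z * (‖u k z‖ * ‖iteratedDeriv k (f m) (τ z)‖)
        ≤ ε / (2 * (n+1)) := by
    intro k hk
    have hkn : k ≤ n := Nat.lt_succ_iff.mp (mem_range.mp hk)
    by_cases hcase : r < ‖τ z‖
    · -- near the boundary
      have hq := hrrP k hkn z hz (lt_of_le_of_lt (Finset.le_sup' rr hk) hcase)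
      have hnum : ν z * ‖u k z‖
          < ε' * (1 - ‖τ z‖ ^ 2) ^ ((k:ℝ)+γ) :=
        (div_lt_iff₀ (hden k)).mp hq
      have hfd := hderiv m k hkn (τ z) hτz
      have hNle : C * N (f m) ≤ C := by
        calc C * N (f m) ≤ C * 1 := mul_le_mul_of_nonneg_left (hNb m) hC.le
          _ = C := mul_one C
      calc ν z * (‖u k z‖ * ‖iteratedDeriv k (f m) (τ z)‖)
          = (ν z * ‖u k z‖) * ‖iteratedDeriv k (f m) (τ z)‖ :=
            by ring
        _ ≤ (ε' * (1 - ‖τ z‖ ^ 2) ^ ((k:ℝ)+γ)) *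
              (C * N (f m) / (1 - ‖τ z‖ ^ 2) ^ ((k:ℝ)+γ)) := by
            apply mul_le_mul hnum.le hfd (norm_nonneg _)
            positivity
        _ = ε' * (C * N (f m)) := by
            field_simp
        _ ≤ ε' * C := mul_le_mul_of_nonneg_left hNle hε'.le
        _ = ε / (2 * (n+1)) := by
            rw [hε'def, div_mul_eq_mul_div, mul_comm (2 * ((n:ℝ)+1)) C, ← div_div,
              mul_div_assoc, div_self hC.ne', mul_one]
    · -- in the compact core
      push_neg at hcase
      have hw : τ z ∈ closedBall (0:ℂ) r := by
        simpa [Complex.dist_eq] using hcase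
      have hsmall := hM₀ m hm k hk (τ z) hw
      have hnum : ν z * ‖u k z‖ ≤ Mf k := by
        have h1 := (div_le_iff₀ (hden k)).mp (hMf k z hz hkn)
        calc ν z * ‖u k z‖
            ≤ Mf k * (1 - ‖τ z‖ ^ 2) ^ ((k:ℝ)+γ) := h1
          _ ≤ Mf k * 1 := mul_le_mul_of_nonneg_left (hden1 k) (hMf0 k)
          _ = Mf k := mul_one _
      have hid : iteratedDeriv k (f m) (τ z) = deriv^[k] (f m) (τ z) := by
        rw [iteratedDeriv_eq_iterate]
      have hMk1 : (0:ℝ) < Mf k + 1 := by linarith [hMf0 k]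
      calc ν z * (‖u k z‖ * ‖iteratedDeriv k (f m) (τ z)‖)
          = (ν z * ‖u k z‖) * ‖deriv^[k] (f m) (τ z)‖ := by
            rw [hid]; ring
        _ ≤ Mf k * (ε / (2 * (n+1) * (Mf k + 1))) :=
            mul_le_mul hnum hsmall.le (norm_nonneg _) (hMf0 k)
        _ ≤ (Mf k + 1) * (ε / (2 * (n+1) * (Mf k + 1))) := by
            apply mul_le_mul_of_nonneg_right (by linarith)
            positivity
        _ = ε / (2 * (n+1)) := by
            have h2 : (Mf k + 1) ≠ 0 := hMk1.ne'
            field_simp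
  have hsumcard : ∑ _k ∈ range (n+1), ε / (2 * ((n:ℝ)+1)) = ε / 2 := by
    rw [Finset.sum_const, card_range, nsmul_eq_mul]
    push_cast
    field_simp
  calc ν z * ‖∑ k ∈ range (n+1), u k z * iteratedDeriv k (f m) (τ z)‖
      ≤ ν z * ∑ k ∈ range (n+1), ‖u k z * iteratedDeriv k (f m) (τ z)‖ :=
        mul_le_mul_of_nonneg_left (norm_sum_le _ _) (hν z hz).le
    _ = ∑ k ∈ range (n+1),
          ν z * (‖u k z‖ * ‖iteratedDeriv k (f m) (τ z)‖) := by
        rw [Finset.mul_sum]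
        refine Finset.sum_congr rfl fun k _ => ?_
        rw [norm_mul]
    _ ≤ ∑ _k ∈ range (n+1), ε / (2 * ((n:ℝ)+1)) := Finset.sum_le_sum hterm
    _ = ε / 2 := hsumcard
    _ < ε := by linarith
end

section
/- Let $\mu$ be a positive measure on $\mathbb{D}$, $0<q<\infty$, $\gamma\ge0$, $n\ge1$. Suppose that for some $h\in L^q(\mu)$, for every $a\in\mathbb{D}$ and every $0\le k\le n$ the function $f_a\sigma_a^k$ (with $f_a(w)=((1-|a|^2)/(1-\bar a w)^2)^{\gamma}$, $\sigma_a(w)=(a-w)/(1-\bar a w)$) satisfies $|S^n_{\vec u,\tau}(f_a\sigma_a^k)(z)|\le h(z)$ $\mu$-a.e. Assume further the derivative estimate $|g^{(i)}(w)|\le C\|g\|_X/(1-|w|^2)^{i+\gamma}$ holds for the functions $f_a\sigma_a^k$, which lie in the unit ball of $X$. Then $Q_n(z)=\frac{|u_n(z)|}{(1-|\tau(z)|^2)^{n+\gamma}}$ belongs to $L^q(\mu)$, and by downward induction every $Q_k(z)=\frac{|u_k(z)|}{(1-|\tau(z)|^2)^{k+\gamma}}$, $0\le k\le n$, belongs to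 $L^q(\mu)$. -/
open Metric Finset MeasureTheory ComplexConjugate Filter Set Topology

private lemma derivDiffOn {f : ℂ → ℂ} {U : Set ℂ} (hU : IsOpen U)
    (hf : DifferentiableOn ℂ f U) : DifferentiableOn ℂ (deriv f) U :=
  ((hf.analyticOnNhd hU).deriv).differentiableOn

private lemma tlu_iteratedDeriv {ι : Type*} {φ : Filter ι} {F : ι → ℂ → ℂ} {f : ℂ → ℂ}
    {U : Set ℂ} (hU : IsOpen U) (i : ℕ)
    (hF : ∀ᶠ a in φ, DifferentiableOn ℂ (F a) U)
    (hf : TendstoLocallyUniformlyOn F f φ U) :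
    TendstoLocallyUniformlyOn (fun a => iteratedDeriv i (F a)) (iteratedDeriv i f) φ U := by
  induction i generalizing F f with
  | zero => simpa [iteratedDeriv_zero] using hf
  | succ i ih =>
    have h1 : TendstoLocallyUniformlyOn (deriv ∘ F) (deriv f) φ U := hf.deriv hF hU
    have h2 : ∀ᶠ a in φ, DifferentiableOn ℂ (deriv (F a)) U :=
      hF.mono fun a ha => derivDiffOn hU ha
    have := ih h2 h1
    simpa [iteratedDeriv_succ', Function.comp] using this

private lemma key_iteratedDeriv (b : ℂ) {s : Set ℂ} (hs : IsOpen s) (hb : b ∈ s) :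
    ∀ (i m : ℕ) (r : ℂ → ℂ), DifferentiableOn ℂ r s → i ≤ m →
      iteratedDeriv i (fun w => (b - w) ^ m * r w) b
        = if i = m then (-1) ^ m * (m.factorial : ℂ) * r b else 0 := by
  intro i
  induction i with
  | zero =>
    intro m r hr him
    simp only [iteratedDeriv_zero, sub_self]
    rcases Nat.eq_zero_or_pos m with hm | hm
    · subst hm; simp
    · rw [zero_pow hm.ne', zero_mul, if_neg (by omega)]
  | succ i ih =>
    intro m r hr him
    have hm : 1 ≤ m := by omega
    set r' : ℂ → ℂ := fun w => -(m : ℂ) * r w + (b - w) * deriv r w with hr'def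
    have hr' : DifferentiableOn ℂ r' s := by
      apply DifferentiableOn.add
      · exact (differentiableOn_const _).mul hr
      · exact ((differentiableOn_const b).sub differentiableOn_id).mul (derivDiffOn hs hr)
    have hpowm : ∀ w : ℂ, (b - w) ^ m = (b - w) ^ (m - 1) * (b - w) := by
      intro w
      rw [← pow_succ]
      congr 1
      omega
    have hderiv_eq : ∀ w ∈ s, deriv (fun w => (b - w) ^ m * r w) w
        = (b - w) ^ (m - 1) * r' w := by
      intro w hw
      have h1 : HasDerivAt (fun w : ℂ => (b - w) ^ m)
          ((m : ℂ) * (b - w) ^ (m - 1) * (-1)) w := ((hasDerivAt_id w).const_sub b).pow m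
      have h2 : HasDerivAt r (deriv r w) w :=
        (hr.differentiableAt (hs.mem_nhds hw)).hasDerivAt
      rw [show (fun w => (b - w) ^ m * r w) = (fun w => (b - w) ^ m) * r from rfl,
        (h1.mul h2).deriv, hr'def, hpowm w]
      ring
    have congr_ev : iteratedDeriv (i + 1) (fun w => (b - w) ^ m * r w) b
        = iteratedDeriv i (fun w => (b - w) ^ (m - 1) * r' w) b := by
      rw [iteratedDeriv_succ']
      exact Filter.EventuallyEq.iteratedDeriv_eq i
        (eventually_of_mem (hs.mem_nhds hb) hderiv_eq)
    rw [congr_ev, ih (m - 1) r' hr' (by omega)]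
    have hr'b : r' b = -(m : ℂ) * r b := by simp [hr'def]
    by_cases hik : i + 1 = m
    · rw [if_pos (by omega), if_pos hik, hr'b]
      have hfac : (m.factorial : ℂ) = (m : ℂ) * ((m - 1).factorial : ℂ) := by
        conv_lhs => rw [show m = (m - 1) + 1 by omega]
        rw [Nat.factorial_succ]
        push_cast [Nat.cast_sub hm]
        ring
      have hneg : ((-1 : ℂ)) ^ m = (-1) ^ (m - 1) * (-1) := by
        rw [← pow_succ]
        congr 1
        omega
      rw [hfac, hneg]
      ring
    · rw [if_neg (by omega), if_neg hik]

private noncomputable def Gf (γ : ℝ) (k : ℕ) (a : ℂ) : ℂ → ℂ := fun w =>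
  (((1 : ℂ) - (‖a‖ : ℂ) ^ 2) / (1 - conj a * w) ^ 2) ^ (γ : ℂ) *
    ((a - w) / (1 - conj a * w)) ^ k

private lemma absmul_lt {a w : ℂ} (ha : ‖a‖ < 1) (hw : ‖w‖ < 1) :
    ‖conj a * w‖ < 1 := by
  rw [norm_mul, Complex.norm_conj]
  nlinarith [norm_nonneg a, norm_nonneg w]

private lemma den_ne {c : ℂ} (hc : ‖c‖ < 1) : 1 - c ≠ 0 := by
  intro h
  have : c = 1 := by linear_combination -h
  simp [this] at hc

private lemma den_re_pos {c : ℂ} (hc : ‖c‖ < 1) : 0 < (1 - c).re := by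
  have h1 : c.re ≤ ‖c‖ := Complex.re_le_norm c
  simp only [Complex.sub_re, Complex.one_re]
  linarith

private lemma slit_mem {c : ℂ} (hc : ‖c‖ < 1) {x : ℝ} (hx : 0 < x) :
    ((x : ℂ) / (1 - c) ^ 2) ∈ Complex.slitPlane := by
  set d : ℂ := 1 - c with hd
  have hdre : 0 < d.re := den_re_pos hc
  have hd0 : d ≠ 0 := den_ne hc
  have hnsq : 0 < Complex.normSq (d ^ 2) := by
    rw [Complex.normSq_pos]
    exact pow_ne_zero 2 hd0
  have hre2 : (d ^ 2).re = d.re * d.re - d.im * d.im := by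
    rw [pow_two, Complex.mul_re]
  have him2 : (d ^ 2).im = d.re * d.im + d.im * d.re := by
    rw [pow_two, Complex.mul_im]
  rw [Complex.mem_slitPlane_iff]
  by_cases him : d.im = 0
  · left
    rw [div_eq_mul_inv, Complex.re_ofReal_mul, Complex.inv_re, hre2, him]
    have hd2 : d.re * d.re - 0 * 0 = d.re * d.re := by ring
    rw [hd2]
    exact mul_pos hx (div_pos (mul_pos hdre hdre) hnsq)
  · right
    rw [div_eq_mul_inv, Complex.im_ofReal_mul, Complex.inv_im, him2]
    intro hcon
    have h2 : d.im * (2 * d.re) ≠ 0 := mul_ne_zero him (by positivity)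
    rcases mul_eq_zero.mp hcon with h | h
    · exact hx.ne' h
    · rcases div_eq_zero_iff.mp h with h' | h'
      · exact h2 (by linear_combination neg_eq_zero.mp h')
      · exact hnsq.ne' h'

private lemma Gf_base_eq (a : ℂ) :
    (1 : ℂ) - (‖a‖ : ℂ) ^ 2 = ((1 - ‖a‖ ^ 2 : ℝ) : ℂ) := by
  push_cast; ring

private lemma Gf_diff {γ : ℝ} {k : ℕ} {a : ℂ} (ha : a ∈ ball (0 : ℂ) 1) :
    DifferentiableOn ℂ (Gf γ k a) (ball (0 : ℂ) 1) := by
  rw [mem_ball_zero_iff] at ha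
  intro w hw
  rw [mem_ball_zero_iff] at hw
  have hc : ‖conj a * w‖ < 1 := absmul_lt ha hw
  have hden : 1 - conj a * w ≠ 0 := den_ne hc
  have hdenD : DifferentiableAt ℂ (fun w : ℂ => 1 - conj a * w) w :=
    (differentiableAt_const (1 : ℂ)).sub ((differentiableAt_const (conj a)).mul differentiableAt_id)
  have hx : 0 < 1 - ‖a‖ ^ 2 := by nlinarith [norm_nonneg a]
  have hBD : DifferentiableAt ℂ
      (fun w : ℂ => ((1 : ℂ) - (‖a‖ : ℂ) ^ 2) / (1 - conj a * w) ^ 2) w :=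
    (differentiableAt_const ((1 : ℂ) - (‖a‖ : ℂ) ^ 2)).div (hdenD.pow 2) (pow_ne_zero 2 hden)
  have hslit : ((1 : ℂ) - (‖a‖ : ℂ) ^ 2) / (1 - conj a * w) ^ 2 ∈
      Complex.slitPlane := by
    rw [Gf_base_eq]
    exact slit_mem hc hx
  have h1 : DifferentiableAt ℂ
      (fun w : ℂ => (((1 : ℂ) - (‖a‖ : ℂ) ^ 2) / (1 - conj a * w) ^ 2) ^ (γ : ℂ)) w :=
    hBD.cpow (differentiableAt_const _) hslit
  have h2 : DifferentiableAt ℂ (fun w : ℂ => ((a - w) / (1 - conj a * w)) ^ k) w :=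
    (((differentiableAt_const a).sub differentiableAt_id).div hdenD hden).pow k
  exact (h1.mul h2).differentiableWithinAt

private lemma Gf_cont {γ : ℝ} {k : ℕ} :
    ContinuousOn (fun p : ℂ × ℂ => Gf γ k p.1 p.2) (ball (0 : ℂ) 1 ×ˢ ball (0 : ℂ) 1) := by
  intro p hp
  apply ContinuousAt.continuousWithinAt
  obtain ⟨ha, hw⟩ := hp
  rw [mem_ball_zero_iff] at ha
  rw [mem_ball_zero_iff] at hw
  have hc : ‖conj p.1 * p.2‖ < 1 := absmul_lt ha hw
  have hden : 1 - conj p.1 * p.2 ≠ 0 := den_ne hc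
  have hx : 0 < 1 - ‖p.1‖ ^ 2 := by nlinarith [norm_nonneg p.1]
  have hdenC : ContinuousAt (fun p : ℂ × ℂ => 1 - conj p.1 * p.2) p :=
    continuousAt_const.sub
      ((Complex.continuous_conj.comp continuous_fst).continuousAt.mul continuous_snd.continuousAt)
  have hnumC : ContinuousAt (fun p : ℂ × ℂ => (1 : ℂ) - (‖p.1‖ : ℂ) ^ 2) p :=
    continuousAt_const.sub
      (((Complex.continuous_ofReal.comp (continuous_norm.comp continuous_fst)).continuousAt).pow 2)
  have hBC : ContinuousAt
      (fun p : ℂ × ℂ => ((1 : ℂ) - (‖p.1‖ : ℂ) ^ 2) / (1 - conj p.1 * p.2) ^ 2) p :=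
    hnumC.div (hdenC.pow 2) (pow_ne_zero 2 hden)
  have hslit : ((1 : ℂ) - (‖p.1‖ : ℂ) ^ 2) / (1 - conj p.1 * p.2) ^ 2 ∈
      Complex.slitPlane := by
    rw [Gf_base_eq]
    exact slit_mem hc hx
  have h1 : ContinuousAt
      (fun p : ℂ × ℂ =>
        (((1 : ℂ) - (‖p.1‖ : ℂ) ^ 2) / (1 - conj p.1 * p.2) ^ 2) ^ (γ : ℂ)) p :=
    hBC.cpow continuousAt_const hslit
  have h2 : ContinuousAt (fun p : ℂ × ℂ => ((p.1 - p.2) / (1 - conj p.1 * p.2)) ^ k) p :=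
    ((continuous_fst.continuousAt.sub continuous_snd.continuousAt).div hdenC hden).pow k
  exact h1.mul h2

private lemma Gf_val {γ : ℝ} {k : ℕ} {b : ℂ} (hb : b ∈ ball (0 : ℂ) 1) {i : ℕ} (hik : i ≤ k) :
    ‖iteratedDeriv i (Gf γ k b) b‖ =
      if i = k then (k.factorial : ℝ) / (1 - ‖b‖ ^ 2) ^ ((k : ℝ) + γ) else 0 := by
  have hb1 : ‖b‖ < 1 := by rwa [mem_ball_zero_iff] at hb
  have hx : 0 < 1 - ‖b‖ ^ 2 := by nlinarith [norm_nonneg b]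
  set A : ℂ → ℂ := fun w =>
    (((1 : ℂ) - (‖b‖ : ℂ) ^ 2) / (1 - conj b * w) ^ 2) ^ (γ : ℂ) *
      ((1 - conj b * w) ^ k)⁻¹ with hA
  have hGeq : Gf γ k b = fun w => (b - w) ^ k * A w := by
    funext w
    simp only [Gf, hA]
    rw [div_pow]
    ring
  have hAD : DifferentiableOn ℂ A (ball (0 : ℂ) 1) := by
    intro w hw
    have hw1 : ‖w‖ < 1 := by rwa [mem_ball_zero_iff] at hw
    have hc := absmul_lt hb1 hw1
    have hden := den_ne hc
    have hdenD : DifferentiableAt ℂ (fun w : ℂ => 1 - conj b * w) w :=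
      (differentiableAt_const (1 : ℂ)).sub
        ((differentiableAt_const (conj b)).mul differentiableAt_id)
    have hslit : ((1 : ℂ) - (‖b‖ : ℂ) ^ 2) / (1 - conj b * w) ^ 2 ∈
        Complex.slitPlane := by
      rw [Gf_base_eq]; exact slit_mem hc hx
    have h1 : DifferentiableAt ℂ
        (fun w : ℂ =>
          (((1 : ℂ) - (‖b‖ : ℂ) ^ 2) / (1 - conj b * w) ^ 2) ^ (γ : ℂ)) w :=
      ((differentiableAt_const ((1 : ℂ) - (‖b‖ : ℂ) ^ 2)).div (hdenD.pow 2)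
        (pow_ne_zero 2 hden)).cpow (differentiableAt_const _) hslit
    exact (h1.mul ((hdenD.pow k).inv (pow_ne_zero k hden))).differentiableWithinAt
  rw [hGeq, key_iteratedDeriv b isOpen_ball hb i k A hAD hik]
  by_cases hik' : i = k
  · subst hik'
    rw [if_pos rfl, if_pos rfl]
    have hbb : 1 - conj b * b = ((1 - ‖b‖ ^ 2 : ℝ) : ℂ) := by
      rw [mul_comm, Complex.mul_conj, Complex.normSq_eq_norm_sq]
      push_cast
      ring
    have hAb : ‖A b‖ =
        (1 - ‖b‖ ^ 2)⁻¹ ^ γ * ((1 - ‖b‖ ^ 2) ^ i)⁻¹ := by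
      have hx0 : ((1 - ‖b‖ ^ 2 : ℝ) : ℂ) ≠ 0 := Complex.ofReal_ne_zero.mpr hx.ne'
      have hbase : ((1 : ℂ) - (‖b‖ : ℂ) ^ 2) / (1 - conj b * b) ^ 2 =
          (((1 - ‖b‖ ^ 2)⁻¹ : ℝ) : ℂ) := by
        rw [hbb, Gf_base_eq, Complex.ofReal_inv]
        rw [pow_two ((1 - ‖b‖ ^ 2 : ℝ) : ℂ), div_mul_eq_div_div, div_self hx0, one_div]
      simp only [hA]
      rw [hbase, hbb, norm_mul, norm_inv, norm_pow]
      rw [Complex.norm_cpow_eq_rpow_re_of_pos (inv_pos.mpr hx), Complex.norm_real, Real.norm_eq_abs,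
        abs_of_pos hx, Complex.ofReal_re]
    rw [norm_mul, norm_mul, norm_pow, hAb]
    simp only [norm_neg, norm_one, one_pow, one_mul, Complex.norm_natCast]
    rw [Real.rpow_add hx, Real.rpow_natCast, Real.inv_rpow hx.le]
    rw [div_eq_mul_inv, mul_inv]
    ring
  · rw [if_neg hik', if_neg hik', norm_zero]

private lemma Gf_conv {γ : ℝ} {k : ℕ} {D : Set ℂ} (hD : D ⊆ ball (0 : ℂ) 1)
    {b : ℂ} (hb : b ∈ ball (0 : ℂ) 1) {w0 : ℂ} (hw0 : w0 ∈ ball (0 : ℂ) 1) (i : ℕ) :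
    Tendsto (fun a => iteratedDeriv i (Gf γ k a) w0) (𝓝[D] b)
      (𝓝 (iteratedDeriv i (Gf γ k b) w0)) := by
  obtain ⟨ε, hε, hsub⟩ := Metric.isOpen_iff.mp Metric.isOpen_ball b hb
  set Kb : Set ℂ := closedBall b (ε / 2) with hKbdef
  have hKb : Kb ⊆ ball (0 : ℂ) 1 := (closedBall_subset_ball (by linarith)).trans hsub
  have hKbb : b ∈ Kb := mem_closedBall_self (by linarith)
  have hKbn : Kb ∈ 𝓝 b := closedBall_mem_nhds b (by linarith)
  have hf : TendstoLocallyUniformlyOn (fun a => Gf γ k a) (Gf γ k b) (𝓝[D] b)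
      (ball (0 : ℂ) 1) := by
    rw [tendstoLocallyUniformlyOn_iff_forall_isCompact Metric.isOpen_ball]
    intro K hKsub hKc
    have hUC : UniformContinuousOn (↿(Gf γ k)) (Kb ×ˢ K) :=
      ((isCompact_closedBall b (ε / 2)).prod hKc).uniformContinuousOn_of_continuous
        (Gf_cont.mono (prod_mono hKb hKsub))
    have hTU := hUC.tendstoUniformlyOn hKbb
    have hle : 𝓝[D] b ≤ 𝓝[Kb] b :=
      nhdsWithin_le_iff.mpr (mem_nhdsWithin_of_mem_nhds hKbn)
    intro u hu
    exact (hTU u hu).filter_mono hle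
  have hF : ∀ᶠ a in 𝓝[D] b, DifferentiableOn ℂ (Gf γ k a) (ball (0 : ℂ) 1) :=
    eventually_mem_nhdsWithin.mono fun a ha => Gf_diff (hD ha)
  exact (tlu_iteratedDeriv Metric.isOpen_ball i hF hf).tendsto_at hw0

/-- If the images of the test functions `f_a σ_a^k` under `S^n_{u,τ}` are dominated by a
single `L^q(μ)` function, then each weight quotient `Q_k` belongs to `L^q(μ)`. -/
theorem stmt_15 (n : ℕ) (hn : 1 ≤ n) (τ : ℂ → ℂ) (u : ℕ → ℂ → ℂ) (γ C : ℝ)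
    (hγ : 0 ≤ γ) (hC : 0 < C)
    (μ : Measure ℂ) (hμ : μ (ball (0 : ℂ) 1)ᶜ = 0) (q : ℝ) (hq : 0 < q)
    (hτ : DifferentiableOn ℂ τ (ball (0 : ℂ) 1))
    (hτmap : ∀ z ∈ ball (0 : ℂ) 1, τ z ∈ ball (0 : ℂ) 1)
    (hu : ∀ k ≤ n, DifferentiableOn ℂ (u k) (ball (0 : ℂ) 1))
    (g : ℂ → ℕ → ℂ → ℂ)
    (hg : ∀ a ∈ ball (0 : ℂ) 1, ∀ k ≤ n, ∀ w : ℂ,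
      g a k w = (((1 : ℂ) - (‖a‖ : ℂ) ^ 2) / (1 - conj a * w) ^ 2) ^ (γ : ℂ) *
        ((a - w) / (1 - conj a * w)) ^ k)
    (h : ℂ → ℝ) (hh : MemLp h (ENNReal.ofReal q) μ)
    (hdom : ∀ a ∈ ball (0 : ℂ) 1, ∀ k ≤ n,
      ∀ᵐ z ∂μ, ‖∑ i ∈ range (n + 1), u i z * iteratedDeriv i (g a k) (τ z)‖ ≤ h z)
    (hderiv : ∀ a ∈ ball (0 : ℂ) 1, ∀ k ≤ n, ∀ i ≤ n, ∀ w ∈ ball (0 : ℂ) 1,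
      ‖iteratedDeriv i (g a k) w‖ ≤ C / (1 - ‖w‖ ^ 2) ^ ((i : ℝ) + γ)) :
    ∀ k ≤ n,
      MemLp (fun z : ℂ =>
          ‖u k z‖ / (1 - ‖τ z‖ ^ 2) ^ ((k : ℝ) + γ))
        (ENNReal.ofReal q) μ := by
  have hball : ∀ᵐ z ∂μ, z ∈ ball (0 : ℂ) 1 := by
    rw [ae_iff]
    exact hμ
  obtain ⟨D0, hD0c, hD0d⟩ := TopologicalSpace.exists_countable_dense ℂ
  set D : Set ℂ := D0 ∩ ball (0 : ℂ) 1 with hDdef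
  have hDc : D.Countable := hD0c.mono inter_subset_left
  have hDb : D ⊆ ball (0 : ℂ) 1 := inter_subset_right
  have hDcl : ∀ b ∈ ball (0 : ℂ) 1, b ∈ closure D := by
    intro b hb
    rw [_root_.mem_closure_iff]
    intro o ho hbo
    obtain ⟨x, hx1, hx2⟩ := hD0d.inter_open_nonempty (o ∩ ball (0 : ℂ) 1)
      (ho.inter Metric.isOpen_ball) ⟨b, hbo, hb⟩
    exact ⟨x, hx1.1, hx2, hx1.2⟩
  have hμr : μ.restrict (ball (0 : ℂ) 1) = μ := Measure.restrict_eq_self_of_ae_mem hball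
  have hQmeas : ∀ k, k ≤ n → AEStronglyMeasurable
      (fun z : ℂ => ‖u k z‖ / (1 - ‖τ z‖ ^ 2) ^ ((k : ℝ) + γ)) μ := by
    intro k hk
    rw [← hμr]
    apply ContinuousOn.aestronglyMeasurable _ measurableSet_ball
    apply ContinuousOn.div
    · exact continuous_norm.comp_continuousOn (hu k hk).continuousOn
    · apply ContinuousOn.rpow_const
      · exact continuousOn_const.sub
          ((continuous_norm.comp_continuousOn hτ.continuousOn).pow 2)
      · intro z hz
        right
        positivity
    · intro z hz
      have hb1 : ‖τ z‖ < 1 := by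
        have := hτmap z hz
        rwa [mem_ball_zero_iff] at this
      have hx : 0 < 1 - ‖τ z‖ ^ 2 := by nlinarith [norm_nonneg (τ z)]
      exact (Real.rpow_pos_of_pos hx _).ne'
  have key : ∀ k, k ≤ n →
      (∀ i, k < i → i ≤ n → MemLp (fun z : ℂ =>
          ‖u i z‖ / (1 - ‖τ z‖ ^ 2) ^ ((i : ℝ) + γ))
        (ENNReal.ofReal q) μ) →
      MemLp (fun z : ℂ =>
          ‖u k z‖ / (1 - ‖τ z‖ ^ 2) ^ ((k : ℝ) + γ))
        (ENNReal.ofReal q) μ := by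
    intro k hk IH
    set ψ : ℂ → ℝ := fun z => (k.factorial : ℝ)⁻¹ * (h z + C * ∑ i ∈ Finset.Ioc k n,
        ‖u i z‖ / (1 - ‖τ z‖ ^ 2) ^ ((i : ℝ) + γ)) with hψdef
    have hψLp : MemLp ψ (ENNReal.ofReal q) μ := by
      apply MemLp.const_mul
      apply MemLp.add hh
      apply MemLp.const_mul
      exact memLp_finset_sum _ fun i hi =>
        IH i (Finset.mem_Ioc.mp hi).1 (Finset.mem_Ioc.mp hi).2
    have hae2 : ∀ᵐ z ∂μ, ∀ a (_ : a ∈ D),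
        ‖∑ i ∈ range (n + 1), u i z * iteratedDeriv i (g a k) (τ z)‖ ≤ h z :=
      (ae_ball_iff hDc).mpr fun a ha => hdom a (hDb ha) k hk
    have hbound : ∀ᵐ z ∂μ,
        ‖‖u k z‖ / (1 - ‖τ z‖ ^ 2) ^ ((k : ℝ) + γ)‖ ≤ ‖ψ z‖ := by
      filter_upwards [hball, hae2] with z hz hza
      set b : ℂ := τ z with hbdef
      have hbmem : b ∈ ball (0 : ℂ) 1 := hτmap z hz
      have hb1 : ‖b‖ < 1 := by rwa [mem_ball_zero_iff] at hbmem
      have hx : 0 < 1 - ‖b‖ ^ 2 := by nlinarith [norm_nonneg b]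
      have hgG : ∀ a ∈ ball (0 : ℂ) 1, g a k = Gf γ k a := by
        intro a ha
        funext w
        rw [hg a ha k hk w]
        rfl
      have hNB : (𝓝[D] b).NeBot := mem_closure_iff_nhdsWithin_neBot.mp (hDcl b hbmem)
      -- limit along D
      have hT : Tendsto (fun a => ‖∑ i ∈ range (n + 1),
            u i z * iteratedDeriv i (Gf γ k a) b‖) (𝓝[D] b)
          (𝓝 (‖∑ i ∈ range (n + 1), u i z * iteratedDeriv i (Gf γ k b) b‖)) := by
        apply continuous_norm.continuousAt.tendsto.comp
        apply tendsto_finset_sum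
        intro i _
        exact tendsto_const_nhds.mul (Gf_conv hDb hbmem hbmem i)
      have hev : ∀ᶠ a in 𝓝[D] b, ‖∑ i ∈ range (n + 1),
          u i z * iteratedDeriv i (Gf γ k a) b‖ ≤ h z := by
        refine eventually_mem_nhdsWithin.mono fun a ha => ?_
        have := hza a ha
        rwa [hgG a (hDb ha)] at this
      have hlim : ‖∑ i ∈ range (n + 1),
          u i z * iteratedDeriv i (Gf γ k b) b‖ ≤ h z := le_of_tendsto hT hev
      -- the value estimates
      set d : ℕ → ℂ := fun i => iteratedDeriv i (Gf γ k b) b with hddef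
      have hdk : ‖d k‖ =
          (k.factorial : ℝ) / (1 - ‖b‖ ^ 2) ^ ((k : ℝ) + γ) := by
        have := Gf_val (γ := γ) hbmem (le_refl k)
        rwa [if_pos rfl] at this
      have hdlt : ∀ i, i < k → ‖d i‖ = 0 := by
        intro i hi
        have := Gf_val (γ := γ) hbmem hi.le
        rwa [if_neg hi.ne] at this
      have hdgt : ∀ i, k < i → i ≤ n → ‖d i‖ ≤
          C / (1 - ‖b‖ ^ 2) ^ ((i : ℝ) + γ) := by
        intro i _ hi2
        have := hderiv b hbmem k hk i hi2 b hbmem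
        rwa [hgG b hbmem] at this
      have hkmem : k ∈ range (n + 1) := Finset.mem_range.mpr (by omega)
      have hsplit : u k z * d k = (∑ i ∈ range (n + 1), u i z * d i) -
          ∑ i ∈ (range (n + 1)).erase k, u i z * d i := by
        rw [← Finset.add_sum_erase _ _ hkmem]
        ring
      have htri : ‖u k z * d k‖ ≤ h z +
          ∑ i ∈ (range (n + 1)).erase k, ‖u i z * d i‖ := by
        rw [hsplit, sub_eq_add_neg]
        refine (norm_add_le _ _).trans ?_
        rw [norm_neg]
        exact add_le_add hlim (norm_sum_le _ _)
      have hIoc : Finset.Ioc k n = ((range (n + 1)).erase k).filter (fun i => k < i) := by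
        ext i
        simp only [Finset.mem_Ioc, Finset.mem_filter, Finset.mem_erase, Finset.mem_range]
        omega
      have hterm : ∑ i ∈ (range (n + 1)).erase k, ‖u i z * d i‖ ≤
          C * ∑ i ∈ Finset.Ioc k n,
            ‖u i z‖ / (1 - ‖b‖ ^ 2) ^ ((i : ℝ) + γ) := by
        calc ∑ i ∈ (range (n + 1)).erase k, ‖u i z * d i‖
            ≤ ∑ i ∈ (range (n + 1)).erase k, (if k < i then
                C * (‖u i z‖ / (1 - ‖b‖ ^ 2) ^ ((i : ℝ) + γ)) else 0) := by
              apply Finset.sum_le_sum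
              intro i hi
              obtain ⟨hne, hir⟩ := Finset.mem_erase.mp hi
              rw [norm_mul]
              by_cases hki : k < i
              · rw [if_pos hki]
                have hd := hdgt i hki (by have := Finset.mem_range.mp hir; omega)
                calc ‖u i z‖ * ‖d i‖
                    ≤ ‖u i z‖ * (C / (1 - ‖b‖ ^ 2) ^ ((i : ℝ) + γ)) :=
                      mul_le_mul_of_nonneg_left hd (norm_nonneg _)
                  _ = C * (‖u i z‖ / (1 - ‖b‖ ^ 2) ^ ((i : ℝ) + γ)) := by
                      ring
              · rw [if_neg hki, hdlt i (by omega), mul_zero]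
          _ = ∑ i ∈ ((range (n + 1)).erase k).filter (fun i => k < i),
                C * (‖u i z‖ / (1 - ‖b‖ ^ 2) ^ ((i : ℝ) + γ)) :=
              (Finset.sum_filter _ _).symm
          _ = C * ∑ i ∈ Finset.Ioc k n,
                ‖u i z‖ / (1 - ‖b‖ ^ 2) ^ ((i : ℝ) + γ) := by
              rw [← hIoc, Finset.mul_sum]
      have habs_uk : ‖u k z * d k‖ = (k.factorial : ℝ) *
          (‖u k z‖ / (1 - ‖b‖ ^ 2) ^ ((k : ℝ) + γ)) := by
        rw [norm_mul, hdk]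
        ring
      have hkf : (0 : ℝ) < (k.factorial : ℝ) := by positivity
      have h1 : (k.factorial : ℝ) *
          (‖u k z‖ / (1 - ‖b‖ ^ 2) ^ ((k : ℝ) + γ)) ≤
          h z + C * ∑ i ∈ Finset.Ioc k n,
            ‖u i z‖ / (1 - ‖b‖ ^ 2) ^ ((i : ℝ) + γ) := by
        rw [← habs_uk]
        exact htri.trans (add_le_add le_rfl hterm)
      have h2 := mul_le_mul_of_nonneg_left h1 (inv_nonneg.mpr hkf.le)
      rw [← mul_assoc, inv_mul_cancel₀ hkf.ne', one_mul] at h2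
      have hψz : ψ z = (k.factorial : ℝ)⁻¹ * (h z + C * ∑ i ∈ Finset.Ioc k n,
          ‖u i z‖ / (1 - ‖b‖ ^ 2) ^ ((i : ℝ) + γ)) := rfl
      have hQ0 : 0 ≤ ‖u k z‖ / (1 - ‖b‖ ^ 2) ^ ((k : ℝ) + γ) :=
        div_nonneg (norm_nonneg _) (Real.rpow_pos_of_pos hx _).le
      rw [Real.norm_eq_abs, Real.norm_eq_abs, abs_of_nonneg hQ0]
      exact (h2.trans_eq hψz.symm).trans (le_abs_self _)
    exact MemLp.of_le hψLp (hQmeas k hk) hbound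
  have main : ∀ j k, k ≤ n → n - k ≤ j →
      MemLp (fun z : ℂ =>
          ‖u k z‖ / (1 - ‖τ z‖ ^ 2) ^ ((k : ℝ) + γ))
        (ENNReal.ofReal q) μ := by
    intro j
    induction j with
    | zero =>
      intro k hk hj
      have hkn : k = n := by omega
      exact key k hk fun i hi1 hi2 => absurd hi2 (by omega)
    | succ j ihj =>
      intro k hk _
      exact key k hk fun i hi1 hi2 => ihj i hi2 (by omega)
  intro k hk
  exact main n k hk (by omega)
end
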